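/- arXiv:1406.5414 — 2 statements merged into one kernel-verified Lean document; each statement's English description precedes it below -/
import Mathlib

section
/- Let $X$ be a bounded (by $2\varepsilon$) martingale with $E[X] = 0$ and $E[|X|] \ge 6\alpha\varepsilon$ for some $\alpha \in (0,1)$ and $\varepsilon > 0$. Then $P[X < -\alpha\varepsilon] \ge \alpha$. -/
open MeasureTheory Filter Set
open scoped ENNReal Topology

noncomputable section
open Classical

variable {Ω : Type*}

/-- A simple predictable strategy `H = ∑_{i=0}^n K_i 1_{(τ_i, τ_{i+1}]}` with stopping times
`0 = τ_0 ≤ … ≤ τ_{n+1} = 1` and `K_i` being `𝓕_{τ_i}`-measurable. -/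
structure SimpleStrategy {m : MeasurableSpace Ω} (𝓕 : Filtration ℝ m) where
  n : ℕ
  τ : ℕ → Ω → ℝ
  K : ℕ → Ω → ℝ
  isStopping : ∀ i, IsStoppingTime 𝓕 (fun ω => ((τ i ω : ℝ) : WithTop ℝ))
  mono : ∀ ω, Monotone fun i => τ i ω
  zero : ∀ ω, τ 0 ω = 0
  last : ∀ ω, τ (n + 1) ω = 1
  meas : ∀ i, Measurable[(isStopping i).measurableSpace] (K i)

namespace SimpleStrategy

variable {m : MeasurableSpace Ω} {𝓕 : Filtration ℝ m}

/-- The strategy is bounded by `1`. -/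
def Bounded1 (H : SimpleStrategy 𝓕) : Prop := ∀ i ω, |H.K i ω| ≤ 1

/-- The (elementary) stochastic integral `(H ∙ X)_t`. -/
def integral (H : SimpleStrategy 𝓕) (X : ℝ → Ω → ℝ) (t : ℝ) (ω : Ω) : ℝ :=
  ∑ i ∈ Finset.range (H.n + 1),
    H.K i ω * (X (min (H.τ (i + 1) ω) t) ω - X (min (H.τ i ω) t) ω)

end SimpleStrategy

/-- Running supremum of `|X|` over the time interval `[0,1]`. -/
def runSup (X : ℝ → Ω → ℝ) (ω : Ω) : ℝ :=
  sSup ((fun t => |X t ω|) '' Icc (0 : ℝ) 1)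

/-- A sequence of random variables is bounded in `L⁰` (bounded in probability). -/
def L0BoundedSeq {m : MeasurableSpace Ω} (μ : Measure Ω) (ξ : ℕ → Ω → ℝ) : Prop :=
  Tendsto (fun a : ℝ => ⨆ n, μ {ω | a ≤ |ξ n ω|}) atTop (𝓝 (0 : ℝ≥0∞))

/-- Predictable uniform tightness (P-UT) of a sequence of processes on `[0,1]`. -/
def PUT {m : MeasurableSpace Ω} (𝓕 : Filtration ℝ m) (μ : Measure Ω)
    (X : ℕ → ℝ → Ω → ℝ) : Prop :=
  ∀ t ∈ Icc (0 : ℝ) 1,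
    Tendsto (fun a : ℝ =>
        ⨆ (n : ℕ) (H : SimpleStrategy 𝓕) (_ : H.Bounded1),
          μ {ω | a ≤ |H.integral (X n) t ω|}) atTop (𝓝 (0 : ℝ≥0∞))

/-- A process is càdlàg (right-continuous with left limits) in time, for every `ω`. -/
def IsCadlag (X : ℝ → Ω → ℝ) : Prop :=
  ∀ ω, (∀ t, ContinuousWithinAt (fun s => X s ω) (Ici t) t) ∧
    ∀ t, ∃ l, Tendsto (fun s => X s ω) (𝓝[<] t) (𝓝 l)

/-- The jump `ΔX_t = X_t - X_{t-}` of a process. -/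
def jump (X : ℝ → Ω → ℝ) (t : ℝ) (ω : Ω) : ℝ :=
  X t ω - Function.leftLim (fun s => X s ω) t

/-- Uniform convergence in probability on `[0,1]` (ucp). -/
def TendstoUCP {m : MeasurableSpace Ω} (μ : Measure Ω) (X : ℕ → ℝ → Ω → ℝ)
    (Y : ℝ → Ω → ℝ) : Prop :=
  ∀ ε : ℝ, 0 < ε →
    Tendsto (fun n => μ {ω | ε ≤ runSup (fun t ω' => X n t ω' - Y t ω') ω}) atTop
      (𝓝 (0 : ℝ≥0∞))

/-- A finite partition `0 = t_0 < t_1 < … < t_r = 1` of `[0,1]`. -/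
structure Partition01 where
  r : ℕ
  t : ℕ → ℝ
  pos : 0 < r
  zero : t 0 = 0
  last : t r = 1
  mono : ∀ i < r, t i < t (i + 1)

/-- The mesh of a partition. -/
def Partition01.mesh (P : Partition01) : ℝ :=
  ⨆ i : Fin P.r, (P.t (i.1 + 1) - P.t i.1)

/-- Riemann-type sum for the quadratic covariation along a partition, up to time `t`. -/
def qcovSum (P : Partition01) (X Y : ℝ → Ω → ℝ) (t : ℝ) (ω : Ω) : ℝ :=
  ∑ i ∈ Finset.range P.r,
    (X (min (P.t (i + 1)) t) ω - X (min (P.t i) t) ω) *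
      (Y (min (P.t (i + 1)) t) ω - Y (min (P.t i) t) ω)

/-- `Q` is the quadratic covariation process `[X,Y]` : along every sequence of partitions with
vanishing mesh the Riemann sums converge in probability. -/
def IsQCovProcess {m : MeasurableSpace Ω} (μ : Measure Ω) (X Y Q : ℝ → Ω → ℝ) : Prop :=
  ∀ P : ℕ → Partition01, Tendsto (fun k => (P k).mesh) atTop (𝓝 (0 : ℝ)) →
    ∀ t ∈ Icc (0 : ℝ) 1,
      TendstoInMeasure μ (fun k ω => qcovSum (P k) X Y t ω) atTop (Q t)

/-- Riemann-type sum with left endpoints for the stochastic integral `H_- ∙ X`. -/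
def leftRiemannSum (P : Partition01) (H X : ℝ → Ω → ℝ) (t : ℝ) (ω : Ω) : ℝ :=
  ∑ i ∈ Finset.range P.r,
    H (P.t i) ω * (X (min (P.t (i + 1)) t) ω - X (min (P.t i) t) ω)

/-- `I` is the stochastic integral process `H_- ∙ X`, characterized as the limit in
probability of left-endpoint Riemann sums along partitions with vanishing mesh. -/
def IsLeftIntegral {m : MeasurableSpace Ω} (μ : Measure Ω) (H X I : ℝ → Ω → ℝ) : Prop :=
  ∀ P : ℕ → Partition01, Tendsto (fun k => (P k).mesh) atTop (𝓝 (0 : ℝ)) →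
    ∀ t ∈ Icc (0 : ℝ) 1,
      TendstoInMeasure μ (fun k ω => leftRiemannSum (P k) H X t ω) atTop (I t)

/-- The process `X` stopped at the random time `τ`. -/
def stoppedAt (X : ℝ → Ω → ℝ) (τ : Ω → ℝ) : ℝ → Ω → ℝ := fun t ω => X (min t (τ ω)) ω

/-- A local martingale on `[0,1]`. -/
def IsLocalMartingale {m : MeasurableSpace Ω} (𝓕 : Filtration ℝ m) (μ : Measure Ω)
    (N : ℝ → Ω → ℝ) : Prop :=
  ∃ τ : ℕ → Ω → ℝ, (∀ k, IsStoppingTime 𝓕 (fun ω => ((τ k ω : ℝ) : WithTop ℝ))) ∧ (∀ ω, Monotone fun k => τ k ω) ∧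
    (∀ ω, ∃ k, 1 ≤ τ k ω) ∧ ∀ k, Martingale (stoppedAt N (τ k)) 𝓕 μ

/-- The predictable σ-algebra on `ℝ × Ω`, generated by the stochastic intervals
`(a,b] × A`, `A ∈ 𝓕_a`, and `{0} × A`, `A ∈ 𝓕_0`. -/
def predictableSigma {m : MeasurableSpace Ω} (𝓕 : Filtration ℝ m) :
    MeasurableSpace (ℝ × Ω) :=
  MeasurableSpace.generateFrom
    ({s | ∃ (a b : ℝ) (A : Set Ω), MeasurableSet[𝓕 a] A ∧ s = Ioc a b ×ˢ A} ∪
      {s | ∃ A : Set Ω, MeasurableSet[𝓕 0] A ∧ s = ({0} : Set ℝ) ×ˢ A})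

/-- A predictable process. -/
def Predictable {m : MeasurableSpace Ω} (𝓕 : Filtration ℝ m) (H : ℝ → Ω → ℝ) : Prop :=
  @Measurable _ _ (predictableSigma 𝓕) _ fun p : ℝ × Ω => H p.1 p.2

/-- The Emery (semimartingale) distance on processes on `[0,1]`. -/
def emeryDist {m : MeasurableSpace Ω} (𝓕 : Filtration ℝ m) (μ : Measure Ω)
    (X Y : ℝ → Ω → ℝ) : ℝ :=
  ⨆ H : {H : SimpleStrategy 𝓕 // H.Bounded1},
    ∫ ω, min (runSup (fun t ω' =>
      H.1.integral (fun s ω'' => X s ω'' - Y s ω'') t ω') ω) 1 ∂μ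

/-- A set of processes is (sequentially) closed in the Emery topology. -/
def EmeryClosed {m : MeasurableSpace Ω} (𝓕 : Filtration ℝ m) (μ : Measure Ω)
    (𝒳 : Set (ℝ → Ω → ℝ)) : Prop :=
  ∀ (X : ℕ → ℝ → Ω → ℝ) (Y : ℝ → Ω → ℝ), (∀ n, X n ∈ 𝒳) →
    Tendsto (fun n => emeryDist 𝓕 μ (X n) Y) atTop (𝓝 (0 : ℝ)) → Y ∈ 𝒳

/-- An abstract stochastic integral operator `(H, X) ↦ H ∙ X`, assumed to be additive,
to agree with the elementary integral on elementary predictable strategies, to be monotone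
against integrators of monotone paths (Stieltjes case) and to satisfy associativity. -/
structure StochInt {m : MeasurableSpace Ω} (𝓕 : Filtration ℝ m) where
  int : (ℝ → Ω → ℝ) → (ℝ → Ω → ℝ) → ℝ → Ω → ℝ
  add_strat : ∀ H G X t ω,
    int (fun s ω' => H s ω' + G s ω') X t ω = int H X t ω + int G X t ω
  add_integrator : ∀ H X Y t ω,
    int H (fun s ω' => X s ω' + Y s ω') t ω = int H X t ω + int H Y t ω
  elem : ∀ (u v : ℝ) (K : Ω → ℝ), Measurable[𝓕 u] K → ∀ X t ω,
    int (fun s ω' => K ω' * (Ioc u v).indicator (fun _ => (1 : ℝ)) s) X t ω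
      = K ω * (X (min v t) ω - X (min u t) ω)
  mono_fv : ∀ H G X, (∀ s ω, H s ω ≤ G s ω) → (∀ ω, Monotone fun s => X s ω) →
    ∀ t ω, int H X t ω ≤ int G X t ω
  assoc : ∀ H G X t ω, int H (int G X) t ω = int (fun s ω' => H s ω' * G s ω') X t ω

/-- Kabanov's concatenation property of a set of (1-admissible) wealth processes. -/
def ConcatProperty {m : MeasurableSpace Ω} (𝓕 : Filtration ℝ m) (I : StochInt 𝓕)
    (𝒳 : Set (ℝ → Ω → ℝ)) : Prop :=
  ∀ H G : ℝ → Ω → ℝ, Predictable 𝓕 H → Predictable 𝓕 G →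
    (∃ c, ∀ s ω, |H s ω| ≤ c) → (∃ c, ∀ s ω, |G s ω| ≤ c) →
    (∀ s ω, 0 ≤ H s ω) → (∀ s ω, 0 ≤ G s ω) → (∀ s ω, H s ω * G s ω = 0) →
    ∀ X ∈ 𝒳, ∀ Y ∈ 𝒳,
      (∀ t ∈ Icc (0 : ℝ) 1, ∀ ω, -1 ≤ I.int H X t ω + I.int G Y t ω) →
      (fun t ω => I.int H X t ω + I.int G Y t ω) ∈ 𝒳

/-- The abstract setting of Kabanov: `𝒳₁` is a convex set of semimartingales starting at `0`,
bounded from below by `-1`, closed in the Emery topology, with the concatenation property. -/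
def KabanovSetting {m : MeasurableSpace Ω} (𝓕 : Filtration ℝ m) (μ : Measure Ω)
    (I : StochInt 𝓕) (𝒳 : Set (ℝ → Ω → ℝ)) : Prop :=
  Convex ℝ 𝒳 ∧ (∀ X ∈ 𝒳, ∀ ω, X 0 ω = 0) ∧
    (∀ X ∈ 𝒳, ∀ t ∈ Icc (0 : ℝ) 1, ∀ ω, -1 ≤ X t ω) ∧
    EmeryClosed 𝓕 μ 𝒳 ∧ ConcatProperty 𝓕 I 𝒳

/-- **Quantitative lower bound on the negative part.** If `|X| ≤ 2ε` a.s., `E[X] = 0` and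
`E[|X|] ≥ 6αε` for some `α ∈ (0,1)`, `ε > 0`, then `P[X < -αε] ≥ α`. -/
theorem neg_part_bound
    {m : MeasurableSpace Ω} (μ : Measure Ω) [IsProbabilityMeasure μ]
    (ε α : ℝ) (hε : 0 < ε) (hα : 0 < α) (hα1 : α < 1)
    (X : Ω → ℝ) (hint : Integrable X μ)
    (hbd : ∀ᵐ ω ∂μ, |X ω| ≤ 2 * ε)
    (hmean : ∫ ω, X ω ∂μ = 0)
    (habs : 6 * α * ε ≤ ∫ ω, |X ω| ∂μ) :
    ENNReal.ofReal α ≤ μ {ω | X ω < -(α * ε)} := by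
  obtain ⟨g, hgm, hXg⟩ := hint.aestronglyMeasurable
  have hgmeas : Measurable g := hgm.measurable
  set A : Set Ω := {ω | g ω < -(α * ε)} with hAdef
  have hAm : MeasurableSet A := measurableSet_lt hgmeas measurable_const
  have hsets : μ {ω | X ω < -(α * ε)} = μ A := by
    refine measure_congr ?_
    filter_upwards [hXg] with ω h
    show (X ω < -(α * ε)) = (g ω < -(α * ε))
    rw [h]
  rw [hsets]
  set f : Ω → ℝ := fun ω => max (-X ω) 0 with hfdef
  have hf_int : Integrable f μ := hint.neg.pos_part
  have hf_eq : ∀ ω, f ω = (|X ω| - X ω) / 2 := by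
    intro ω
    rcases le_total 0 (X ω) with h | h
    · rw [abs_of_nonneg h]
      simp [f, max_eq_right (by linarith : -X ω ≤ 0)]
    · rw [abs_of_nonpos h]
      rw [hfdef]
      simp only [max_eq_left (by linarith : (0:ℝ) ≤ -X ω)]
      ring
  have hf_integral : (3 : ℝ) * α * ε ≤ ∫ ω, f ω ∂μ := by
    have : ∫ ω, f ω ∂μ = (∫ ω, |X ω| ∂μ - ∫ ω, X ω ∂μ) / 2 := by
      rw [← integral_sub hint.abs hint, ← integral_div]
      exact integral_congr_ae (Filter.Eventually.of_forall fun ω => hf_eq ω)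
    rw [this, hmean]
    linarith
  have hf_le : ∀ᵐ ω ∂μ, f ω ≤ 2 * ε := by
    filter_upwards [hbd] with ω h
    have : -X ω ≤ |X ω| := neg_le_abs _
    simp only [f, max_le_iff]
    constructor <;> [linarith; positivity]
  -- split integral
  have hsplit : ∫ ω, f ω ∂μ = (∫ ω in A, f ω ∂μ) + ∫ ω in Aᶜ, f ω ∂μ :=
    (integral_add_compl hAm hf_int).symm
  have hbound1 : ∫ ω in A, f ω ∂μ ≤ 2 * ε * (μ A).toReal := by
    calc ∫ ω in A, f ω ∂μ ≤ ∫ _ in A, 2 * ε ∂μ :=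
          setIntegral_mono_ae hf_int.integrableOn (integrableOn_const (measure_ne_top _ _)) hf_le
      _ = (μ A).toReal * (2 * ε) := by rw [setIntegral_const]; simp [smul_eq_mul, Measure.real]
      _ = 2 * ε * (μ A).toReal := by ring
  have hbound2 : ∫ ω in Aᶜ, f ω ∂μ ≤ α * ε := by
    have hle : ∀ᵐ ω ∂μ.restrict Aᶜ, f ω ≤ α * ε := by
      rw [ae_restrict_iff' hAm.compl]
      filter_upwards [hXg] with ω hω hmem
      have hg : -(α * ε) ≤ g ω := not_lt.1 hmem
      have : -X ω ≤ α * ε := by rw [hω]; linarith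
      simp only [f, max_le_iff]
      constructor <;> [linarith; positivity]
    calc ∫ ω in Aᶜ, f ω ∂μ ≤ ∫ _ in Aᶜ, α * ε ∂μ :=
          setIntegral_mono_ae_restrict hf_int.integrableOn (integrableOn_const (measure_ne_top _ _)) hle
      _ = (μ Aᶜ).toReal * (α * ε) := by rw [setIntegral_const]; simp [smul_eq_mul, Measure.real]
      _ ≤ 1 * (α * ε) := by
          apply mul_le_mul_of_nonneg_right _ (by positivity)
          simpa using ENNReal.toReal_mono (by simp) (prob_le_one (μ := μ) (s := Aᶜ))
      _ = α * ε := one_mul _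
  have hp : α ≤ (μ A).toReal := by
    have h3 : 3 * α * ε ≤ 2 * ε * (μ A).toReal + α * ε := by
      calc 3 * α * ε ≤ ∫ ω, f ω ∂μ := hf_integral
        _ = _ := hsplit
        _ ≤ _ := add_le_add hbound1 hbound2
    nlinarith
  calc ENNReal.ofReal α ≤ ENNReal.ofReal (μ A).toReal := ENNReal.ofReal_le_ofReal hp
    _ = μ A := ENNReal.ofReal_toReal (measure_ne_top _ _)
end
end

section
/- Let $(X^n)_{n\ge0}$ be a sequence of semimartingales satisfying the (P-UT) property. Then the sequence of random variables $(\sup_{t \le 1} |X^n_t|)_{n \ge 0}$ is bounded in $L^0$ (bounded in probability), and the sequence of quadratic variations $([X^n, X^n]_1)_{n \ge 0}$ is bounded in $L^0$. -/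
open MeasureTheory Filter Set
open scoped ENNReal Topology

noncomputable section
open Classical

variable {Ω : Type*}

/-! ### Auxiliary material for the proof -/

section Aux

variable {m : MeasurableSpace Ω} {𝓕 : Filtration ℝ m}

/-- First time (in list order) in a list of deterministic times where `|X|` exceeds `a`;
defaults to `1`. -/
def listHit (X : ℝ → Ω → ℝ) (a : ℝ) : List ℝ → Ω → ℝ
  | [], _ => 1
  | q :: L, ω => if a ≤ |X q ω| then q else listHit X a L ω

lemma listHit_mem (X : ℝ → Ω → ℝ) (a : ℝ) (L : List ℝ) (ω : Ω) :
    listHit X a L ω = 1 ∨ listHit X a L ω ∈ L := by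
  induction L with
  | nil => exact Or.inl rfl
  | cons q L ih =>
    by_cases h : a ≤ |X q ω|
    · exact Or.inr (by simp [listHit, h])
    · rcases ih with h1 | h2
      · exact Or.inl (by simp [listHit, h, h1])
      · exact Or.inr (by simp [listHit, h]; right; exact h2)

lemma listHit_hit {X : ℝ → Ω → ℝ} {a : ℝ} {L : List ℝ} {ω : Ω}
    (h : ∃ q ∈ L, a ≤ |X q ω|) : a ≤ |X (listHit X a L ω) ω| := by
  induction L with
  | nil => simp at h
  | cons q L ih =>
    by_cases hq : a ≤ |X q ω|
    · simpa [listHit, hq] using hq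
    · rcases h with ⟨p, hp, hpa⟩
      rcases List.mem_cons.1 hp with rfl | hpL
      · exact absurd hpa hq
      · simpa [listHit, hq] using ih ⟨p, hpL, hpa⟩

lemma listHit_isStoppingTime {X : ℝ → Ω → ℝ} (hadap : Adapted 𝓕 X) (a : ℝ) :
    ∀ {L : List ℝ}, L.Pairwise (· ≤ ·) → (∀ q ∈ L, q ∈ Icc (0 : ℝ) 1) →
      IsStoppingTime 𝓕 (fun ω => ((listHit X a L ω : ℝ) : WithTop ℝ)) := by
  intro L
  induction L with
  | nil => intro _ _; exact isStoppingTime_const 𝓕 1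
  | cons q L ih =>
    intro hs hmem t
    simp only [WithTop.coe_le_coe]
    have hL : IsStoppingTime 𝓕 (fun ω => ((listHit X a L ω : ℝ) : WithTop ℝ)) :=
      ih hs.of_cons (fun p hp => hmem p (List.mem_cons_of_mem _ hp))
    have hLt : MeasurableSet[𝓕 t] {ω | listHit X a L ω ≤ t} := by
      simpa only [WithTop.coe_le_coe] using hL t
    have hC : MeasurableSet[𝓕 q] {ω | a ≤ |X q ω|} :=
      (measurable_abs.comp (hadap q)) measurableSet_Ici
    by_cases hqt : q ≤ t
    · have hset : {ω | listHit X a (q :: L) ω ≤ t}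
          = {ω | a ≤ |X q ω|} ∪ ({ω | a ≤ |X q ω|}ᶜ ∩ {ω | listHit X a L ω ≤ t}) := by
        ext ω
        by_cases h : a ≤ |X q ω| <;> simp [listHit, h, hqt]
      rw [hset]
      exact ((𝓕.mono hqt _ hC).union
        (((𝓕.mono hqt _ hC).compl).inter hLt))
    · have hset : {ω | listHit X a (q :: L) ω ≤ t} = (∅ : Set Ω) := by
        ext ω
        simp only [Set.mem_setOf_eq, Set.mem_empty_iff_false, iff_false, not_le]
        by_cases h : a ≤ |X q ω|
        · simpa [listHit, h] using lt_of_not_ge hqt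
        · simp only [listHit, h, if_false]
          rcases listHit_mem X a L ω with h1 | h2
          · rw [h1]; exact lt_of_lt_of_le (lt_of_not_ge hqt) (hmem q List.mem_cons_self).2
          · exact lt_of_lt_of_le (lt_of_not_ge hqt)
              (List.rel_of_pairwise_cons hs h2)
      rw [hset]
      exact @MeasurableSet.empty _ (𝓕 t)

/-- The elementary strategy `1_{(0, σ]}` for a stopping time `σ` with values in `[0,1]`. -/
def stopStrategy (𝓕 : Filtration ℝ m) (σ : Ω → ℝ) (hσ : IsStoppingTime 𝓕 (fun ω => ((σ ω : ℝ) : WithTop ℝ)))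
    (hσ0 : ∀ ω, 0 ≤ σ ω) (hσ1 : ∀ ω, σ ω ≤ 1) : SimpleStrategy 𝓕 where
  n := 1
  τ := fun i ω => if i = 0 then 0 else if i = 1 then σ ω else 1
  K := fun i _ => if i = 0 then 1 else 0
  isStopping := by
    intro i
    show IsStoppingTime 𝓕 fun ω =>
      ((if i = 0 then (0 : ℝ) else if i = 1 then σ ω else 1 : ℝ) : WithTop ℝ)
    rcases Nat.eq_zero_or_pos i with rfl | hi
    · simpa using isStoppingTime_const 𝓕 (0 : ℝ)
    · rcases eq_or_ne i 1 with rfl | hi1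
      · simpa using hσ
      · have : (fun ω : Ω =>
            ((if i = 0 then (0:ℝ) else if i = 1 then σ ω else 1 : ℝ) : WithTop ℝ))
            = fun _ => ((1 : ℝ) : WithTop ℝ) := by
          funext ω; simp [Nat.pos_iff_ne_zero.1 hi, hi1]
        rw [this]; exact isStoppingTime_const 𝓕 1
  mono := by
    intro ω
    apply monotone_nat_of_le_succ
    intro i
    rcases Nat.eq_zero_or_pos i with rfl | hi
    · simpa using hσ0 ω
    · rcases eq_or_ne i 1 with rfl | hi1
      · simpa using hσ1 ω
      · simp [Nat.pos_iff_ne_zero.1 hi, hi1, Nat.succ_ne_zero,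
          (by omega : i + 1 ≠ 1)]
  zero := fun ω => by simp
  last := fun ω => by norm_num
  meas := fun i => measurable_const

lemma stopStrategy_bounded1 (𝓕 : Filtration ℝ m) (σ : Ω → ℝ) (hσ : IsStoppingTime 𝓕 (fun ω => ((σ ω : ℝ) : WithTop ℝ)))
    (hσ0 : ∀ ω, 0 ≤ σ ω) (hσ1 : ∀ ω, σ ω ≤ 1) :
    (stopStrategy 𝓕 σ hσ hσ0 hσ1).Bounded1 := by
  intro i ω
  simp only [stopStrategy]
  split_ifs <;> norm_num

lemma stopStrategy_integral (𝓕 : Filtration ℝ m) (σ : Ω → ℝ) (hσ : IsStoppingTime 𝓕 (fun ω => ((σ ω : ℝ) : WithTop ℝ)))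
    (hσ0 : ∀ ω, 0 ≤ σ ω) (hσ1 : ∀ ω, σ ω ≤ 1) (X : ℝ → Ω → ℝ) (hX0 : ∀ ω, X 0 ω = 0)
    (ω : Ω) : (stopStrategy 𝓕 σ hσ hσ0 hσ1).integral X 1 ω = X (σ ω) ω := by
  simp [SimpleStrategy.integral, stopStrategy, Finset.sum_range_succ,
    min_eq_left (hσ1 ω), min_eq_left (zero_le_one' ℝ), hX0]

end Aux

section PartitionAux

lemma Partition01.t_mono_le (P : Partition01) : ∀ {i j : ℕ}, i ≤ j → j ≤ P.r →
    P.t i ≤ P.t j := by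
  intro i j
  induction j with
  | zero => intro hij _; simp [Nat.le_zero.1 hij]
  | succ j ihj =>
    intro hij hjr
    rcases Nat.eq_or_lt_of_le hij with rfl | hlt
    · exact le_rfl
    · exact le_trans (ihj (Nat.lt_succ_iff.1 hlt) (le_of_lt hjr))
        (le_of_lt (P.mono j hjr))

lemma Partition01.t_mem (P : Partition01) {i : ℕ} (hi : i ≤ P.r) :
    P.t i ∈ Icc (0 : ℝ) 1 := by
  constructor
  · rw [← P.zero]; exact P.t_mono_le (Nat.zero_le i) hi
  · rw [← P.last]; exact P.t_mono_le hi le_rfl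

end PartitionAux

section GridAux

variable {m : MeasurableSpace Ω} {𝓕 : Filtration ℝ m}

/-- The strategy with deterministic times `P.t i` and clamped coefficients `Y_{t_i}/b`. -/
def gridStrategy (P : Partition01) (b : ℝ) (Y : ℝ → Ω → ℝ) (hY : Adapted 𝓕 Y) :
    SimpleStrategy 𝓕 where
  n := P.r - 1
  τ := fun i _ => P.t (min i P.r)
  K := fun i ω => max (-1) (min 1 (Y (P.t (min i P.r)) ω / b))
  isStopping := fun i => isStoppingTime_const 𝓕 _
  mono := fun ω i j hij =>
    P.t_mono_le (min_le_min_right _ hij) (min_le_right _ _)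
  zero := fun ω => by simp [P.zero]
  last := fun ω => by
    have h : P.r - 1 + 1 = P.r := Nat.succ_pred_eq_of_pos P.pos
    simp [h, P.last]
  meas := fun i => by
    rw [IsStoppingTime.measurableSpace_const]
    exact measurable_const.max (measurable_const.min ((hY _).div_const b))

lemma gridStrategy_bounded1 (P : Partition01) (b : ℝ) (Y : ℝ → Ω → ℝ)
    (hY : Adapted 𝓕 Y) : (gridStrategy P b Y hY).Bounded1 := by
  intro i ω
  rw [abs_le]
  constructor
  · exact le_max_left _ _
  · exact max_le (by norm_num) (min_le_left _ _)

lemma gridStrategy_integral (P : Partition01) (b : ℝ) (Y : ℝ → Ω → ℝ)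
    (hY : Adapted 𝓕 Y) (X : ℝ → Ω → ℝ) (ω : Ω) :
    (gridStrategy P b Y hY).integral X 1 ω
      = ∑ i ∈ Finset.range P.r,
          max (-1) (min 1 (Y (P.t i) ω / b)) * (X (P.t (i + 1)) ω - X (P.t i) ω) := by
  have hn : P.r - 1 + 1 = P.r := Nat.succ_pred_eq_of_pos P.pos
  rw [SimpleStrategy.integral]
  show (∑ i ∈ Finset.range (P.r - 1 + 1), _) = _
  rw [hn]
  refine Finset.sum_congr rfl fun i hi => ?_
  have hir : i < P.r := Finset.mem_range.1 hi
  have h1 : min i P.r = i := min_eq_left (le_of_lt hir)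
  have h2 : min (i + 1) P.r = i + 1 := min_eq_left hir
  have h3 : min (P.t (i + 1)) 1 = P.t (i + 1) := min_eq_left (P.t_mem hir).2
  have h4 : min (P.t i) 1 = P.t i := min_eq_left (P.t_mem (le_of_lt hir)).2
  simp only [gridStrategy, h1, h2, h3, h4]

lemma gridStrategy_integral_eq (P : Partition01) (b : ℝ) (Y : ℝ → Ω → ℝ)
    (hY : Adapted 𝓕 Y) (X : ℝ → Ω → ℝ) (ω : Ω) (hb : 0 < b)
    (hG : ∀ i < P.r, |Y (P.t i) ω| ≤ b) :
    b * (gridStrategy P b Y hY).integral X 1 ω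
      = ∑ i ∈ Finset.range P.r, Y (P.t i) ω * (X (P.t (i + 1)) ω - X (P.t i) ω) := by
  rw [gridStrategy_integral, Finset.mul_sum]
  refine Finset.sum_congr rfl fun i hi => ?_
  have hir : i < P.r := Finset.mem_range.1 hi
  have habs : |Y (P.t i) ω / b| ≤ 1 := by
    rw [abs_div, abs_of_pos hb, div_le_one hb]
    exact hG i hir
  rw [abs_le] at habs
  rw [min_eq_right habs.2, max_eq_right habs.1]
  field_simp

lemma qcov_identity (P : Partition01) (X : ℝ → Ω → ℝ) (ω : Ω) (hX0 : X 0 ω = 0) :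
    qcovSum P X X 1 ω = (X 1 ω) ^ 2
      - 2 * ∑ i ∈ Finset.range P.r, X (P.t i) ω * (X (P.t (i + 1)) ω - X (P.t i) ω) := by
  have key : qcovSum P X X 1 ω
      = ∑ i ∈ Finset.range P.r,
          (((X (P.t (i + 1)) ω) ^ 2 - (X (P.t i) ω) ^ 2)
            - 2 * (X (P.t i) ω * (X (P.t (i + 1)) ω - X (P.t i) ω))) := by
    rw [qcovSum]
    refine Finset.sum_congr rfl fun i hi => ?_
    have hir : i < P.r := Finset.mem_range.1 hi
    have h3 : min (P.t (i + 1)) 1 = P.t (i + 1) := min_eq_left (P.t_mem hir).2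
    have h4 : min (P.t i) 1 = P.t i := min_eq_left (P.t_mem (le_of_lt hir)).2
    rw [h3, h4]; ring
  rw [key, Finset.sum_sub_distrib, Finset.sum_range_sub (fun i => (X (P.t i) ω) ^ 2),
    ← Finset.mul_sum, P.zero, P.last, hX0]
  ring

/-- The uniform partition of `[0,1]` into `k+1` pieces. -/
def unifP (k : ℕ) : Partition01 where
  r := k + 1
  t := fun i => (i : ℝ) / (k + 1)
  pos := Nat.succ_pos k
  zero := by simp
  last := by
    field_simp
    simp
  mono := fun i _ => by
    show (i : ℝ) / ((k : ℝ) + 1) < ((i + 1 : ℕ) : ℝ) / ((k : ℝ) + 1)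
    have hk : (0 : ℝ) < (k : ℝ) + 1 := by positivity
    push_cast
    rw [div_lt_div_iff₀ hk hk]
    nlinarith

lemma unifP_mesh (k : ℕ) : (unifP k).mesh = 1 / ((k : ℝ) + 1) := by
  have h : ∀ i : Fin (k + 1),
      (unifP k).t (i.1 + 1) - (unifP k).t i.1 = 1 / ((k : ℝ) + 1) := by
    intro i
    show ((i.1 + 1 : ℕ) : ℝ) / (k + 1) - (i.1 : ℝ) / (k + 1) = 1 / ((k : ℝ) + 1)
    push_cast
    ring
  haveI : Nonempty (Fin (unifP k).r) := ⟨⟨0, (unifP k).pos⟩⟩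
  rw [Partition01.mesh]
  rw [show (fun i : Fin (unifP k).r => (unifP k).t (i.1 + 1) - (unifP k).t i.1)
      = fun _ : Fin (unifP k).r => 1 / ((k : ℝ) + 1) from funext h]
  exact ciSup_const

end GridAux

section MainAux

variable {m : MeasurableSpace Ω} {𝓕 : Filtration ℝ m}

lemma runSup_nonneg (X : ℝ → Ω → ℝ) (ω : Ω) : 0 ≤ runSup X ω := by
  rw [runSup]
  by_cases h : BddAbove ((fun t => |X t ω|) '' Icc (0 : ℝ) 1)
  · exact le_trans (abs_nonneg _) (le_csSup h ⟨0, ⟨le_rfl, zero_le_one⟩, rfl⟩)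
  · rw [Real.sSup_of_not_bddAbove h]

lemma listEvent_le {μ : Measure Ω} (X : ℕ → ℝ → Ω → ℝ) (hadap : ∀ n, Adapted 𝓕 (X n))
    (h0 : ∀ n ω, X n 0 ω = 0) (n : ℕ) (a : ℝ) (L : List ℝ) (hs : L.Pairwise (· ≤ ·))
    (hmem : ∀ q ∈ L, q ∈ Icc (0 : ℝ) 1) :
    μ {ω | ∃ q ∈ L, a ≤ |X n q ω|}
      ≤ ⨆ (n : ℕ) (H : SimpleStrategy 𝓕) (_ : H.Bounded1),
          μ {ω | a ≤ |H.integral (X n) 1 ω|} := by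
  have hσ : IsStoppingTime 𝓕 (fun ω => ((listHit (X n) a L ω : ℝ) : WithTop ℝ)) :=
    listHit_isStoppingTime (hadap n) a hs hmem
  have hσ0 : ∀ ω, 0 ≤ listHit (X n) a L ω := fun ω => by
    rcases listHit_mem (X n) a L ω with h | h
    · rw [h]; norm_num
    · exact (hmem _ h).1
  have hσ1 : ∀ ω, listHit (X n) a L ω ≤ 1 := fun ω => by
    rcases listHit_mem (X n) a L ω with h | h
    · rw [h]
    · exact (hmem _ h).2
  have hsub : {ω | ∃ q ∈ L, a ≤ |X n q ω|}
      ⊆ {ω | a ≤ |(stopStrategy 𝓕 _ hσ hσ0 hσ1).integral (X n) 1 ω|} := by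
    intro ω hω
    rw [Set.mem_setOf_eq, stopStrategy_integral 𝓕 _ hσ hσ0 hσ1 (X n) (h0 n)]
    exact listHit_hit hω
  refine le_trans (measure_mono hsub) ?_
  exact le_iSup_of_le n (le_iSup_of_le (stopStrategy 𝓕 _ hσ hσ0 hσ1)
    (le_iSup_of_le (stopStrategy_bounded1 𝓕 _ hσ hσ0 hσ1) le_rfl))

lemma tendsto_sqrt_sub_one_atTop : Tendsto (fun a : ℝ => Real.sqrt (a - 1)) atTop atTop := by
  rw [tendsto_atTop_atTop]
  intro b
  refine ⟨b ^ 2 + 1, fun a ha => ?_⟩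
  rcases le_or_gt b 0 with hb | hb
  · exact le_trans hb (Real.sqrt_nonneg _)
  · rw [show b = Real.sqrt (b ^ 2) from (Real.sqrt_sq hb.le).symm]
    exact Real.sqrt_le_sqrt (by linarith)

end MainAux

/-- **(P-UT) yields `L⁰`-bounds.** If a sequence of semimartingales `(Xⁿ)` satisfies (P-UT),
then `(sup_{t ≤ 1}|Xⁿ_t|)ₙ` and `([Xⁿ,Xⁿ]_1)ₙ` are bounded in `L⁰`. -/
theorem PUT_L0_bounds
    {m : MeasurableSpace Ω} {𝓕 : Filtration ℝ m} {μ : Measure Ω} [IsProbabilityMeasure μ]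
    (X : ℕ → ℝ → Ω → ℝ)
    (hcad : ∀ n, IsCadlag (X n)) (hadap : ∀ n, Adapted 𝓕 (X n))
    (h0 : ∀ n ω, X n 0 ω = 0) (hPUT : PUT 𝓕 μ X)
    (Q : ℕ → ℝ → Ω → ℝ) (hQ : ∀ n, IsQCovProcess μ (X n) (X n) (Q n)) :
    L0BoundedSeq μ (fun n ω => runSup (X n) ω) ∧ L0BoundedSeq μ (fun n ω => Q n 1 ω) := by
  classical
  set S : ℝ → ℝ≥0∞ := fun a =>
    ⨆ (n : ℕ) (H : SimpleStrategy 𝓕) (_ : H.Bounded1),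
      μ {ω | a ≤ |H.integral (X n) 1 ω|} with hSdef
  have hS0 : Tendsto S atTop (𝓝 0) := hPUT 1 ⟨zero_le_one, le_rfl⟩
  -- an enumeration of `(ℚ ∩ [0,1]) ∪ {1}`
  obtain ⟨f, hf⟩ := exists_surjective_nat ℚ
  set e : ℕ → ℝ := fun k => if k = 0 then 1 else
    if ((f (k - 1) : ℝ)) ∈ Icc (0 : ℝ) 1 then ((f (k - 1) : ℝ)) else 1 with he
  have he_mem : ∀ k, e k ∈ Icc (0 : ℝ) 1 := by
    intro k
    rw [he]
    dsimp only
    split_ifs with h1 h2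
    · exact ⟨zero_le_one, le_rfl⟩
    · exact h2
    · exact ⟨zero_le_one, le_rfl⟩
  have he_surj : ∀ q : ℚ, ((q : ℝ)) ∈ Icc (0 : ℝ) 1 → ∃ k, e k = (q : ℝ) := by
    intro q hq
    obtain ⟨j, hj⟩ := hf q
    refine ⟨j + 1, ?_⟩
    rw [he]
    dsimp only
    rw [if_neg (Nat.succ_ne_zero j), Nat.add_sub_cancel, hj, if_pos hq]
  have he0 : e 0 = 1 := by simp [he]
  -- Part 1 : the key uniform bound on the running supremum
  have claim1 : ∀ (n : ℕ) (a : ℝ), 0 ≤ a →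
      μ {ω | a + 1 ≤ |runSup (X n) ω|} ≤ S a := by
    intro n a ha
    have hsub : {ω | a + 1 ≤ |runSup (X n) ω|} ⊆
        ⋃ j : ℕ, {ω | ∃ q ∈ (((Finset.range j).image e).sort (· ≤ ·)), a ≤ |X n q ω|} := by
      intro ω hω
      rw [Set.mem_setOf_eq, abs_of_nonneg (runSup_nonneg _ _)] at hω
      have hne : ((fun t => |X n t ω|) '' Icc (0 : ℝ) 1).Nonempty :=
        ⟨|X n 0 ω|, ⟨0, ⟨le_rfl, zero_le_one⟩, rfl⟩⟩
      have hlt : a < sSup ((fun t => |X n t ω|) '' Icc (0 : ℝ) 1) := by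
        rw [runSup] at hω; linarith
      obtain ⟨x, ⟨t, ht, rfl⟩, hax⟩ := exists_lt_of_lt_csSup hne hlt
      have hk : ∃ k, a ≤ |X n (e k) ω| := by
        rcases eq_or_lt_of_le ht.2 with h1 | h1
        · exact ⟨0, by rw [he0, ← h1]; exact hax.le⟩
        · have hc : Tendsto (fun s => |X n s ω|) (𝓝[Ici t] t) (𝓝 |X n t ω|) :=
            (continuous_abs.tendsto _).comp ((hcad n ω).1 t)
          have hev : {s : ℝ | a < |X n s ω|} ∈ 𝓝[Ici t] t := hc (Ioi_mem_nhds hax)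
          rw [Metric.mem_nhdsWithin_iff] at hev
          obtain ⟨ε, hε, hball⟩ := hev
          obtain ⟨q, hq1, hq2⟩ := exists_rat_btwn
            (show t < min (t + ε) 1 from lt_min (by linarith) h1)
          have hqIcc : ((q : ℝ)) ∈ Icc (0 : ℝ) 1 :=
            ⟨le_trans ht.1 hq1.le, le_of_lt (lt_of_lt_of_le hq2 (min_le_right _ _))⟩
          obtain ⟨k, hk⟩ := he_surj q hqIcc
          refine ⟨k, ?_⟩
          rw [hk]
          have hmemball : (q : ℝ) ∈ Metric.ball t ε ∩ Ici t := by
            constructor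
            · rw [Metric.mem_ball, Real.dist_eq, abs_of_nonneg (by linarith)]
              have := lt_of_lt_of_le hq2 (min_le_left _ _); linarith
            · exact le_of_lt hq1
          exact (hball hmemball).le
      obtain ⟨k, hk⟩ := hk
      refine Set.mem_iUnion.2 ⟨k + 1, ⟨e k, ?_, hk⟩⟩
      rw [Finset.mem_sort]
      exact Finset.mem_image.2 ⟨k, Finset.mem_range.2 (Nat.lt_succ_self k), rfl⟩
    refine le_trans (measure_mono hsub) ?_
    have hdir : Directed (· ⊆ ·)
        (fun j : ℕ => {ω | ∃ q ∈ (((Finset.range j).image e).sort (· ≤ ·)), a ≤ |X n q ω|}) := by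
      apply Monotone.directed_le
      intro j j' hjj ω hω
      obtain ⟨q, hq, hqa⟩ := hω
      exact ⟨q, (Finset.mem_sort _).2 (Finset.image_subset_image
        (Finset.range_subset_range.2 hjj) ((Finset.mem_sort _).1 hq)), hqa⟩
    rw [Directed.measure_iUnion hdir]
    refine iSup_le fun j => ?_
    refine listEvent_le X hadap h0 n a _ (Finset.pairwise_sort _ _) fun q hq => ?_
    obtain ⟨k, hk, rfl⟩ := Finset.mem_image.1 ((Finset.mem_sort _).1 hq)
    exact he_mem k
  have part1 : L0BoundedSeq μ (fun n ω => runSup (X n) ω) := by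
    rw [L0BoundedSeq]
    have hshift : Tendsto (fun a : ℝ => a - 1) atTop atTop := by
      simpa [sub_eq_add_neg] using tendsto_atTop_add_const_right atTop (-1 : ℝ) tendsto_id
    have hcomp : Tendsto (fun a : ℝ => S (a - 1)) atTop (𝓝 0) := hS0.comp hshift
    refine tendsto_of_tendsto_of_tendsto_of_le_of_le' tendsto_const_nhds hcomp ?_ ?_
    · filter_upwards with a using zero_le
    · filter_upwards [eventually_ge_atTop (1 : ℝ)] with a ha
      refine iSup_le fun n => ?_
      have hcl := claim1 n (a - 1) (by linarith)
      rw [show a - 1 + 1 = a by ring] at hcl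
      exact hcl
  -- Part 2 : the quadratic variation
  have hmesh : Tendsto (fun k => (unifP k).mesh) atTop (𝓝 (0 : ℝ)) := by
    simp only [unifP_mesh]
    exact tendsto_one_div_add_atTop_nhds_zero_nat
  have claim2 : ∀ (n : ℕ) (a : ℝ), 2 ≤ a →
      μ {ω | a ≤ |Q n 1 ω|}
        ≤ S (Real.sqrt (a - 1) / 2) + (S (Real.sqrt (a - 1)) + S (Real.sqrt (a - 1) / 4)) := by
    intro n a ha
    set b := Real.sqrt (a - 1) with hbdef
    have hb1 : 1 ≤ b := by
      have h : (1 : ℝ) ≤ a - 1 := by linarith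
      calc (1 : ℝ) = Real.sqrt 1 := Real.sqrt_one.symm
        _ ≤ Real.sqrt (a - 1) := Real.sqrt_le_sqrt h
    have hb0 : 0 < b := lt_of_lt_of_le one_pos hb1
    have hbsq : b ^ 2 = a - 1 := Real.sq_sqrt (by linarith)
    have hTIM : Tendsto
        (fun k => μ {ω | 1 ≤ dist (qcovSum (unifP k) (X n) (X n) 1 ω) (Q n 1 ω)})
        atTop (𝓝 0) := by
      have h := hQ n unifP hmesh 1 ⟨zero_le_one, le_rfl⟩ 1 one_pos
      refine Tendsto.congr (fun k => ?_) h
      congr 1; ext ω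
      simp [edist_dist, ENNReal.one_le_ofReal]
    have key : ∀ k : ℕ, μ {ω | a ≤ |Q n 1 ω|}
        ≤ μ {ω | 1 ≤ dist (qcovSum (unifP k) (X n) (X n) 1 ω) (Q n 1 ω)}
          + (S (b / 2) + (S b + S (b / 4))) := by
      intro k
      set P := unifP k with hP
      set H' := gridStrategy P b (X n) (hadap n) with hH'
      have hsub : {ω | a ≤ |Q n 1 ω|}
          ⊆ {ω | 1 ≤ dist (qcovSum P (X n) (X n) 1 ω) (Q n 1 ω)}
            ∪ ({ω | b / 2 ≤ |X n 1 ω|}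
              ∪ ({ω | ∃ q ∈ (((Finset.range P.r).image P.t).sort (· ≤ ·)), b ≤ |X n q ω|}
                ∪ {ω | b / 4 ≤ |H'.integral (X n) 1 ω|})) := by
        intro ω hω
        rw [Set.mem_setOf_eq] at hω
        by_cases hd : 1 ≤ dist (qcovSum P (X n) (X n) 1 ω) (Q n 1 ω)
        · exact Or.inl hd
        right
        push_neg at hd
        rw [Real.dist_eq] at hd
        have hqc : b ^ 2 ≤ |qcovSum P (X n) (X n) 1 ω| := by
          have h1 : |Q n 1 ω| - |qcovSum P (X n) (X n) 1 ω|
              ≤ |qcovSum P (X n) (X n) 1 ω - Q n 1 ω| := by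
            rw [abs_sub_comm]
            exact abs_sub_abs_le_abs_sub _ _
          rw [hbsq]; linarith
        set Ssum := ∑ i ∈ Finset.range P.r,
          X n (P.t i) ω * (X n (P.t (i + 1)) ω - X n (P.t i) ω) with hSs
        have hid : qcovSum P (X n) (X n) 1 ω = (X n 1 ω) ^ 2 - 2 * Ssum :=
          qcov_identity P (X n) ω (h0 n ω)
        have hcases : b ^ 2 / 2 ≤ (X n 1 ω) ^ 2 ∨ b ^ 2 / 4 ≤ |Ssum| := by
          by_contra hcon
          push_neg at hcon
          have h2 : |qcovSum P (X n) (X n) 1 ω| < b ^ 2 := by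
            rw [hid]
            have htri : |(X n 1 ω) ^ 2 - 2 * Ssum| ≤ |(X n 1 ω) ^ 2| + |2 * Ssum| := by
              rw [sub_eq_add_neg]
              exact (abs_add_le _ _).trans (by rw [abs_neg])
            have habs2 : |(X n 1 ω) ^ 2| + |2 * Ssum| = (X n 1 ω) ^ 2 + 2 * |Ssum| := by
              rw [abs_of_nonneg (sq_nonneg _), abs_mul]
              norm_num
            have hc1 := hcon.1
            have hc2 := hcon.2
            calc |(X n 1 ω) ^ 2 - 2 * Ssum| ≤ (X n 1 ω) ^ 2 + 2 * |Ssum| := by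
                  rw [← habs2]; exact htri
              _ < b ^ 2 := by linarith
          linarith
        rcases hcases with h | h
        · left
          rw [Set.mem_setOf_eq]
          have hsq2 : (b / 2) ^ 2 ≤ (X n 1 ω) ^ 2 := by nlinarith
          calc b / 2 = Real.sqrt ((b / 2) ^ 2) := (Real.sqrt_sq (by positivity)).symm
            _ ≤ Real.sqrt ((X n 1 ω) ^ 2) := Real.sqrt_le_sqrt hsq2
            _ = |X n 1 ω| := Real.sqrt_sq_eq_abs _
        · right
          by_cases hG : ∀ i < P.r, |X n (P.t i) ω| ≤ b
          · right
            rw [Set.mem_setOf_eq]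
            have heq : b * H'.integral (X n) 1 ω = Ssum :=
              gridStrategy_integral_eq P b (X n) (hadap n) (X n) ω hb0 hG
            have habs : |Ssum| = b * |H'.integral (X n) 1 ω| := by
              rw [← heq, abs_mul, abs_of_pos hb0]
            rw [habs] at h
            refine le_of_mul_le_mul_left ?_ hb0
            calc b * (b / 4) = b ^ 2 / 4 := by ring
              _ ≤ b * |H'.integral (X n) 1 ω| := h
          · left
            push_neg at hG
            obtain ⟨i, hir, hib⟩ := hG
            exact ⟨P.t i, (Finset.mem_sort _).2
              (Finset.mem_image.2 ⟨i, Finset.mem_range.2 hir, rfl⟩), hib.le⟩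
      refine le_trans (measure_mono hsub) ?_
      refine le_trans (measure_union_le _ _) ?_
      refine add_le_add le_rfl ?_
      refine le_trans (measure_union_le _ _) ?_
      refine add_le_add ?_ ?_
      · have h1 : {ω | b / 2 ≤ |X n 1 ω|}
            ⊆ {ω | ∃ q ∈ ([1] : List ℝ), b / 2 ≤ |X n q ω|} := by
          intro ω hω
          exact ⟨1, by simp, hω⟩
        refine le_trans (measure_mono h1) ?_
        exact listEvent_le X hadap h0 n (b / 2) [1] (List.pairwise_singleton _ _)
          (fun q hq => by
            rw [List.mem_singleton] at hq
            rw [hq]; exact ⟨zero_le_one, le_rfl⟩)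
      refine le_trans (measure_union_le _ _) ?_
      refine add_le_add ?_ ?_
      · refine listEvent_le X hadap h0 n b _ (Finset.pairwise_sort _ _) fun q hq => ?_
        obtain ⟨i, hi, rfl⟩ := Finset.mem_image.1 ((Finset.mem_sort _).1 hq)
        exact P.t_mem (le_of_lt (Finset.mem_range.1 hi))
      · exact le_iSup_of_le n (le_iSup_of_le H'
          (le_iSup_of_le (gridStrategy_bounded1 P b (X n) (hadap n)) le_rfl))
    have hlim : Tendsto
        (fun k => μ {ω | 1 ≤ dist (qcovSum (unifP k) (X n) (X n) 1 ω) (Q n 1 ω)}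
          + (S (b / 2) + (S b + S (b / 4)))) atTop
        (𝓝 (0 + (S (b / 2) + (S b + S (b / 4))))) :=
      Filter.Tendsto.add hTIM tendsto_const_nhds
    have hfin := ge_of_tendsto hlim (Filter.Eventually.of_forall key)
    rwa [zero_add] at hfin
  have part2 : L0BoundedSeq μ (fun n ω => Q n 1 ω) := by
    rw [L0BoundedSeq]
    have hsq : Tendsto (fun a : ℝ => Real.sqrt (a - 1)) atTop atTop :=
      tendsto_sqrt_sub_one_atTop
    have h2 : Tendsto (fun a : ℝ => Real.sqrt (a - 1) / 2) atTop atTop :=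
      hsq.atTop_div_const two_pos
    have h4 : Tendsto (fun a : ℝ => Real.sqrt (a - 1) / 4) atTop atTop :=
      hsq.atTop_div_const (by norm_num)
    have hlim : Tendsto
        (fun a : ℝ => S (Real.sqrt (a - 1) / 2)
          + (S (Real.sqrt (a - 1)) + S (Real.sqrt (a - 1) / 4))) atTop (𝓝 0) := by
      have hinner := Filter.Tendsto.add (hS0.comp hsq) (hS0.comp h4)
      have houter := Filter.Tendsto.add (hS0.comp h2) hinner
      simpa using houter
    refine tendsto_of_tendsto_of_tendsto_of_le_of_le' tendsto_const_nhds hlim ?_ ?_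
    · filter_upwards with a using zero_le
    · filter_upwards [eventually_ge_atTop (2 : ℝ)] with a ha
      exact iSup_le fun n => claim2 n a ha
  exact ⟨part1, part2⟩
end
end
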